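/- arXiv:1605.05400 — 3 statements merged into one kernel-verified Lean document; each statement's English description precedes it below -/
import Mathlib

section
/- For every 1 ≤ i ≤ r and every integer a, the Chinta–Gunnells action satisfies σ_i(x_i^{a+1}·x_{i+1}^{a+n}) = x_i^{a+1}·x_{i+1}^{a+n}. -/
open scoped BigOperators Classical
open scoped Fin.NatCast

noncomputable section

namespace MetaPaper

variable (F : Type) [Field F]

/-- The field of rational functions in `x_1, …, x_{r+1}` over `F`. -/
abbrev K (r : ℕ) : Type := FractionRing (MvPolynomial (Fin (r+1)) F)

variable (r : ℕ)

/-- The variable `x_i` as an element of `K`. -/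
def XX (i : Fin (r+1)) : K F r :=
  algebraMap (MvPolynomial (Fin (r+1)) F) (K F r) (MvPolynomial.X i)

/-- A constant from `F` as an element of `K`. -/
def CC (c : F) : K F r :=
  algebraMap (MvPolynomial (Fin (r+1)) F) (K F r) (MvPolynomial.C c)

/-- The monomial `x^λ = x_1^{λ_1} ⋯ x_{r+1}^{λ_{r+1}}`. -/
def mon (lam : Fin (r+1) → ℤ) : K F r := ∏ i, XX F r i ^ lam i

/-- The simple reflection `σ_{i+1}` (0-indexed: swapping coordinates `i` and `i+1`). -/
def sref (i : ℕ) : Equiv.Perm (Fin (r+1)) :=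
  Equiv.swap ((i : Fin (r+1))) (((i+1 : ℕ) : Fin (r+1)))

/-- The product of the simple reflections indexed by a word. -/
def wordProd (l : List ℕ) : Equiv.Perm (Fin (r+1)) := (l.map (sref r)).prod

/-- The (Coxeter) length of a permutation: the least length of a word in the
simple reflections representing it. -/
def plen (u : Equiv.Perm (Fin (r+1))) : ℕ :=
  sInf {m | ∃ l : List ℕ, (∀ i ∈ l, i < r) ∧ l.length = m ∧ wordProd r l = u}

/-- The strong Bruhat order: `u ≤ w` iff `u` is the product of a subword of a
reduced word for `w`. -/
def BruhatLE (u w : Equiv.Perm (Fin (r+1))) : Prop :=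
  ∃ l : List ℕ, (∀ i ∈ l, i < r) ∧ wordProd r l = w ∧ l.length = plen r w ∧
    ∃ l' : List ℕ, l'.Sublist l ∧ wordProd r l' = u

/-- The favourite reduced word `σ_1, σ_2 σ_1, σ_3 σ_2 σ_1, …` (0-indexed) for the
longest element of `S_{m+1}`. -/
def favWord (m : ℕ) : List ℕ := (List.range m).flatMap (fun b => (List.range (b+1)).reverse)

/-- `x^{α_i} = x_i / x_{i+1}` (0-indexed `i`). -/
def xalpha (i : ℕ) : K F r := XX F r (i : Fin (r+1)) / XX F r ((i+1 : ℕ) : Fin (r+1))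

/-- The sublattice `Λ₀` of exponent vectors whose coordinates are all congruent mod `n`. -/
def Lam0 (n : ℕ) : Set (Fin (r+1) → ℤ) := {lam | ∀ i j, (n : ℤ) ∣ lam i - lam j}

/-- The subfield `K₀` of `K` generated by the monomials `x^λ` with `λ ∈ Λ₀`. -/
def K0 (n : ℕ) : Subfield (K F r) :=
  Subfield.closure {x | ∃ lam ∈ Lam0 r n, x = mon F r lam}

variable (n : ℕ) (v : F) (g : ℤ → F)

/-- Data of the metaplectic (Chinta–Gunnells) action of `W = S_{r+1}` on `K`,
together with the ordinary permutation action, and their defining properties. -/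
structure Setup : Type where
  /-- the Chinta–Gunnells action -/
  act : Equiv.Perm (Fin (r+1)) → K F r → K F r
  /-- the ordinary permutation action on `K` -/
  perm : Equiv.Perm (Fin (r+1)) → K F r ≃+* K F r
  perm_X : ∀ w i, perm w (XX F r i) = XX F r (w i)
  perm_const : ∀ w c, perm w (CC F r c) = CC F r c
  perm_one : ∀ f, perm 1 f = f
  perm_mul : ∀ u w f, perm (u * w) f = perm u (perm w f)
  act_one : ∀ f, act 1 f = f
  act_mul : ∀ u w f, act (u * w) f = act u (act w f)
  act_add : ∀ w f h, act w (f + h) = act w f + act w h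
  act_const_mul : ∀ w c f, act w (CC F r c * f) = CC F r c * act w f
  act_simple : ∀ i : ℕ, i < r → ∀ lam : Fin (r+1) → ℤ,
    act (sref r i) (mon F r lam) =
      mon F r (fun j => lam (sref r i j)) / (1 - CC F r v * xalpha F r i ^ (n : ℕ)) *
        (xalpha F r i ^ (-((lam (((i+1 : ℕ) : Fin (r+1))) - lam ((i : Fin (r+1)))) % (n : ℤ)))
            * (1 - CC F r v)
          - CC F r v * CC F r (g (1 + lam (((i+1 : ℕ) : Fin (r+1))) - lam ((i : Fin (r+1)))))
            * xalpha F r i ^ (1 - (n : ℤ)) * (1 - xalpha F r i ^ (n : ℕ)))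
  act_K0 : ∀ i : ℕ, i < r → ∀ h f : K F r, h ∈ K0 F r n →
    act (sref r i) (h * f) = perm (sref r i) h * act (sref r i) f

variable {F r n v g}

/-- The metaplectic Demazure operator `D_i`. -/
def Dem (S : Setup F r n v g) (i : ℕ) (f : K F r) : K F r :=
  (f - xalpha F r i ^ (n : ℕ) * S.act (sref r i) f) / (1 - xalpha F r i ^ (n : ℕ))

/-- The metaplectic Demazure–Lusztig operator `T_i`. -/
def DL (S : Setup F r n v g) (i : ℕ) (f : K F r) : K F r :=
  (1 - CC F r v * xalpha F r i ^ (n : ℕ)) * Dem S i f - f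

/-- `D_{i_1} ⋯ D_{i_l}` for a word `[i_1, …, i_l]`. -/
def DWord (S : Setup F r n v g) : List ℕ → K F r → K F r
  | [] => fun f => f
  | i :: l => fun f => Dem S i (DWord S l f)

/-- `T_{i_1} ⋯ T_{i_l}` for a word `[i_1, …, i_l]`. -/
def TWord (S : Setup F r n v g) : List ℕ → K F r → K F r
  | [] => fun f => f
  | i :: l => fun f => DL S i (TWord S l f)

/-- `D_u` for `u ∈ W`, via a chosen reduced word for `u` (by the braid relations
this does not depend on the choice). -/
def Dperm (S : Setup F r n v g) (u : Equiv.Perm (Fin (r+1))) : K F r → K F r :=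
  if h : ∃ l : List ℕ, (∀ i ∈ l, i < r) ∧ l.length = plen r u ∧ wordProd r l = u
  then DWord S h.choose else id

/-- `T_u` for `u ∈ W`, via a chosen reduced word for `u`. -/
def Tperm (S : Setup F r n v g) (u : Equiv.Perm (Fin (r+1))) : K F r → K F r :=
  if h : ∃ l : List ℕ, (∀ i ∈ l, i < r) ∧ l.length = plen r u ∧ wordProd r l = u
  then TWord S h.choose else id

variable (F r n v g)

/-- `a : ℕ → ℕ → ℤ` encodes a Gelfand–Tsetlin pattern of rank `m`
(entries `a i j`, `0 ≤ i ≤ j ≤ m`, zero outside this triangle). -/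
def IsGT (m : ℕ) (a : ℕ → ℕ → ℤ) : Prop :=
  (∀ i j, (j < i ∨ m < j) → a i j = 0) ∧
  (∀ i j, i ≤ j → j ≤ m → 0 ≤ a i j) ∧
  (∀ i j, 1 ≤ i → i ≤ j → j ≤ m → a i j ≤ a (i-1) (j-1) ∧ a (i-1) j ≤ a i j)

/-- `d_i`, the sum of the `i`-th row of a pattern. -/
def rowSum (m : ℕ) (a : ℕ → ℕ → ℤ) (i : ℕ) : ℤ := ∑ j ∈ Finset.Icc i m, a i j

/-- The `p`-th coordinate (0-indexed) of the weight `wt(T) = (d_m, d_{m-1}-d_m, …, d_0-d_1)`. -/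
def wtN (m : ℕ) (a : ℕ → ℕ → ℤ) (p : ℕ) : ℤ := rowSum m a (m - p) - rowSum m a (m - p + 1)

/-- The Γ-array of a pattern: `Γ_{i,j} = Σ_{k=j}^{m} (a_{i,k} - a_{i-1,k})`. -/
def GammaArr (m : ℕ) (a : ℕ → ℕ → ℤ) (i j : ℕ) : ℤ :=
  ∑ k ∈ Finset.Icc j m, (a i k - a (i-1) k)

/-- `h♭(a) = 1 - v` if `n ∣ a`, else `0`. -/
def hflat (a : ℤ) : F := if (n : ℤ) ∣ a then 1 - v else 0

/-- `g♭(a) = v · g_a`. -/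
def gflat (a : ℤ) : F := v * g a

/-- The factor `g_{ij}(T)` of the degree-`n` Gelfand–Tsetlin coefficient. -/
def gcoefP (m : ℕ) (a : ℕ → ℕ → ℤ) (i j : ℕ) : F :=
  if GammaArr m a i (j+1) = GammaArr m a i j ∧
      GammaArr m a i j < GammaArr m a i (j+1) + a (i-1) (j-1) - a (i-1) j then 1
  else if GammaArr m a i (j+1) < GammaArr m a i j ∧
      GammaArr m a i j < GammaArr m a i (j+1) + a (i-1) (j-1) - a (i-1) j then
    hflat F n v (GammaArr m a i j)
  else if GammaArr m a i (j+1) < GammaArr m a i j ∧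
      GammaArr m a i j = GammaArr m a i (j+1) + a (i-1) (j-1) - a (i-1) j then
    gflat F v g (GammaArr m a i j)
  else 0

/-- The degree-`n` Gelfand–Tsetlin coefficient `G^{(n)}(T)`. -/
def Gcoef (m : ℕ) (a : ℕ → ℕ → ℤ) : F :=
  ∏ i ∈ Finset.Icc 1 m, ∏ j ∈ Finset.Icc i m, gcoefP F n v g m a i j

/-- `Γ = (Γ_1, …, Γ_m)` (1-indexed, zero outside) is `ν`-admissible. -/
def IsAdm (m : ℕ) (ν Γ : ℕ → ℤ) : Prop :=
  (∀ j, j = 0 ∨ m < j → Γ j = 0) ∧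
  ∀ j, 1 ≤ j → j ≤ m → Γ (j+1) ≤ Γ j ∧ Γ j ≤ Γ (j+1) + ν j - ν (j+1) + 1

/-- `Γ` is `(ν,k)`-admissible. -/
def IsAdmK (m k : ℕ) (ν Γ : ℕ → ℤ) : Prop := IsAdm m ν Γ ∧ ∀ j, k + 1 < j → Γ j = 0

/-- The `p`-th coordinate (0-indexed) of
`wt^{(ν)}(Γ) = (ν_{m+1}+Γ_m, ν_m+Γ_{m-1}-Γ_m, …, ν_1-Γ_1)`. -/
def wtGam (m : ℕ) (ν Γ : ℕ → ℤ) (p : ℕ) : ℤ := ν (m+1-p) + Γ (m-p) - Γ (m-p+1)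

/-- The factor `c_j` of `G_1^{(ν)}(Γ)`. -/
def gamCoef (ν Γ : ℕ → ℤ) (j : ℕ) : F :=
  if Γ (j+1) = Γ j ∧ Γ j < Γ (j+1) + ν j - ν (j+1) + 1 then 1
  else if Γ (j+1) < Γ j ∧ Γ j < Γ (j+1) + ν j - ν (j+1) + 1 then hflat F n v (Γ j)
  else if Γ (j+1) < Γ j ∧ Γ j = Γ (j+1) + ν j - ν (j+1) + 1 then gflat F v g (Γ j)
  else 0

/-- `G_1^{(ν)}(Γ)`. -/
def G1 (m : ℕ) (ν Γ : ℕ → ℤ) : F := ∏ j ∈ Finset.Icc 1 m, gamCoef F n v g ν Γ j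

/-- The top row `λ + ρ` of a pattern, as a function `ℕ → ℤ` (0-indexed columns). -/
def topRowOf (lam : Fin (r+1) → ℤ) : ℕ → ℤ :=
  fun j => if h : j ≤ r then lam ⟨j, by omega⟩ + ((r : ℤ) - (j : ℤ)) else 0

/-- The weight `λ` reread as a 1-indexed function `ℕ → ℤ` (`ν_j = λ_j`). -/
def nuOf (lam : Fin (r+1) → ℤ) : ℕ → ℤ :=
  fun j => if h : 1 ≤ j ∧ j ≤ r + 1 then lam ⟨j - 1, by omega⟩ else 0

/-- Dominance: `λ_1 ≥ λ_2 ≥ … `. -/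
def Dominant (m : ℕ) (lam : Fin m → ℤ) : Prop := ∀ i j : Fin m, i ≤ j → lam j ≤ lam i

/-- Position of `Γ_{i,j}` in the reading `b_1, b_2, …` of the Γ-array
(rows bottom to top, each row left to right). -/
def bpos (m i j : ℕ) : ℕ := (m - i) * (m - i + 1) / 2 + (j - i + 1)


/-- `δ(A,B) = h♭(A)` if `A < B`, `h♭(A) - 1` if `A = B`, `0` if `A > B`. -/
def deltaHG (A B : ℤ) : F :=
  if A < B then hflat F n v A else if A = B then hflat F n v A - 1 else 0



lemma XX_ne_zero (r : ℕ) (k : Fin (r+1)) : XX ℂ r k ≠ 0 := by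
  intro h0
  have hinj := IsFractionRing.injective (MvPolynomial (Fin (r+1)) ℂ) (K ℂ r)
  have hX0 : (MvPolynomial.X k : MvPolynomial (Fin (r+1)) ℂ) = 0 := by
    apply hinj
    rw [map_zero]
    rw [XX] at h0
    exact h0
  exact MvPolynomial.X_ne_zero _ hX0

/-- the Chinta–Gunnells action satisfies
`σ_i(x_i^{a+1} x_{i+1}^{a+n}) = x_i^{a+1} x_{i+1}^{a+n}`. -/
theorem statement5 (r n : ℕ) (hr : 1 ≤ r) (hn : 1 ≤ n) (v : ℂ) (g : ℤ → ℂ)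
    (hv : v ≠ 0)
    (hgper : ∀ i j : ℤ, i % (n : ℤ) = j % (n : ℤ) → g i = g j)
    (hg0 : g 0 = -1)
    (hginv : ∀ i : ℤ, 1 ≤ i → i ≤ (n : ℤ) - 1 → g i * g ((n : ℤ) - i) = v⁻¹)
    (S : Setup ℂ r n v g) :
    ∀ i : ℕ, i < r → ∀ a : ℤ,
      S.act (sref r i) (mon ℂ r (fun j =>
          if j = (i : Fin (r+1)) then a + 1
          else if j = ((i+1 : ℕ) : Fin (r+1)) then a + (n : ℤ) else 0))
        = mon ℂ r (fun j =>
          if j = (i : Fin (r+1)) then a + 1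
          else if j = ((i+1 : ℕ) : Fin (r+1)) then a + (n : ℤ) else 0) := by
  intro i hi a
  have hivals : ((i : Fin (r+1))).val = i := Fin.val_cast_of_lt (by omega)
  have hjvals : (((i+1 : ℕ) : Fin (r+1))).val = i + 1 := Fin.val_cast_of_lt (by omega)
  have hij : (i : Fin (r+1)) ≠ ((i+1 : ℕ) : Fin (r+1)) := by
    intro h; rw [Fin.ext_iff, hivals, hjvals] at h; omega
  set lam : Fin (r+1) → ℤ := fun j =>
    if j = (i : Fin (r+1)) then a + 1
    else if j = ((i+1 : ℕ) : Fin (r+1)) then a + (n : ℤ) else 0 with hlam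
  have h1 : lam ((i : Fin (r+1))) = a + 1 := by simp [hlam]
  have h2 : lam (((i+1 : ℕ) : Fin (r+1))) = a + (n : ℤ) := by
    show (if ((i+1 : ℕ) : Fin (r+1)) = (i : Fin (r+1)) then a + 1
      else if ((i+1 : ℕ) : Fin (r+1)) = ((i+1 : ℕ) : Fin (r+1)) then a + (n : ℤ) else 0)
      = a + (n : ℤ)
    rw [if_neg (Ne.symm hij), if_pos rfl]
  have hXi := XX_ne_zero r ((i : Fin (r+1)))
  have hXj := XX_ne_zero r (((i+1 : ℕ) : Fin (r+1)))
  -- the denominator is nonzero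
  have hd : (1 : K ℂ r) - CC ℂ r v * xalpha ℂ r i ^ (n : ℕ) ≠ 0 := by
    intro h0
    have h1' : (1 : K ℂ r) = CC ℂ r v * xalpha ℂ r i ^ (n : ℕ) := sub_eq_zero.mp h0
    have h2' : XX ℂ r (((i+1 : ℕ) : Fin (r+1))) ^ (n : ℕ)
        = CC ℂ r v * XX ℂ r ((i : Fin (r+1))) ^ (n : ℕ) := by
      rw [xalpha, div_pow, ← mul_div_assoc, eq_div_iff (pow_ne_zero _ hXj), one_mul] at h1'
      exact h1'
    have h3' : (MvPolynomial.X (((i+1 : ℕ) : Fin (r+1))) : MvPolynomial (Fin (r+1)) ℂ) ^ (n : ℕ)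
        = MvPolynomial.C v * MvPolynomial.X ((i : Fin (r+1))) ^ (n : ℕ) := by
      apply IsFractionRing.injective (MvPolynomial (Fin (r+1)) ℂ) (K ℂ r)
      rw [map_pow, map_mul, map_pow]
      unfold XX CC at h2'
      exact h2'
    have h4' := congrArg (MvPolynomial.eval
      (fun k => if k = (((i+1 : ℕ) : Fin (r+1))) then (1 : ℂ) else 0)) h3'
    rw [map_pow, map_mul, map_pow, MvPolynomial.eval_X, MvPolynomial.eval_X,
      MvPolynomial.eval_C, if_pos rfl, if_neg hij, one_pow,
      zero_pow (by omega : n ≠ 0), mul_zero] at h4'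
    exact one_ne_zero h4'
  rw [S.act_simple i hi lam, h1, h2]
  have hsub : a + (n : ℤ) - (a + 1) = (n : ℤ) - 1 := by ring
  have hmod : ((n : ℤ) - 1) % (n : ℤ) = (n : ℤ) - 1 :=
    Int.emod_eq_of_lt (by omega) (by omega)
  have hgn : g (1 + (a + (n : ℤ)) - (a + 1)) = -1 := by
    have : 1 + (a + (n : ℤ)) - (a + 1) = (n : ℤ) := by ring
    rw [this, hgper (n : ℤ) 0 (by simp [Int.emod_self]), hg0]
  have hCg : CC ℂ r (g (1 + (a + (n : ℤ)) - (a + 1))) = -1 := by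
    rw [hgn, CC, map_neg, map_one, map_neg, map_one]
  rw [hsub, hmod, hCg]
  -- the bracket simplifies to y^(1-n) * (1 - v y^n)
  have hbr : xalpha ℂ r i ^ (-((n : ℤ) - 1)) * (1 - CC ℂ r v)
      - CC ℂ r v * (-1) * xalpha ℂ r i ^ (1 - (n : ℤ)) * (1 - xalpha ℂ r i ^ (n : ℕ))
      = xalpha ℂ r i ^ (1 - (n : ℤ)) * (1 - CC ℂ r v * xalpha ℂ r i ^ (n : ℕ)) := by
    rw [neg_sub]; ring
  rw [hbr, div_mul_eq_mul_div, ← mul_assoc, mul_div_assoc, div_self hd, mul_one]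
  -- compute the two monomials
  have hmon : ∀ mu : Fin (r+1) → ℤ,
      (∀ k, k ≠ (i : Fin (r+1)) → k ≠ (((i+1 : ℕ) : Fin (r+1))) → mu k = 0) →
      mon ℂ r mu = XX ℂ r ((i : Fin (r+1))) ^ mu ((i : Fin (r+1)))
        * XX ℂ r (((i+1 : ℕ) : Fin (r+1))) ^ mu (((i+1 : ℕ) : Fin (r+1))) := by
    intro mu hmu
    rw [mon]
    exact Finset.prod_eq_mul _ _ hij
      (fun c _ hc => by rw [hmu c hc.1 hc.2, zpow_zero])
      (fun h => absurd (Finset.mem_univ _) h) (fun h => absurd (Finset.mem_univ _) h)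
  have hswap : ∀ j, sref r i j = Equiv.swap ((i : Fin (r+1))) (((i+1 : ℕ) : Fin (r+1))) j :=
    fun j => rfl
  have hlam' : lam (sref r i ((i : Fin (r+1)))) = a + (n : ℤ) := by
    rw [hswap, Equiv.swap_apply_left]; exact h2
  have hlam'' : lam (sref r i (((i+1 : ℕ) : Fin (r+1)))) = a + 1 := by
    rw [hswap, Equiv.swap_apply_right]; exact h1
  have hmuz : ∀ k, k ≠ (i : Fin (r+1)) → k ≠ (((i+1 : ℕ) : Fin (r+1))) →
      (fun j => lam (sref r i j)) k = 0 := by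
    intro k hk1 hk2
    simp only [hswap, Equiv.swap_apply_of_ne_of_ne hk1 hk2]
    show (if k = (i : Fin (r+1)) then a + 1
      else if k = ((i+1 : ℕ) : Fin (r+1)) then a + (n : ℤ) else 0) = 0
    rw [if_neg hk1, if_neg hk2]
  have hlz : ∀ k, k ≠ (i : Fin (r+1)) → k ≠ (((i+1 : ℕ) : Fin (r+1))) → lam k = 0 := by
    intro k hk1 hk2
    show (if k = (i : Fin (r+1)) then a + 1
      else if k = ((i+1 : ℕ) : Fin (r+1)) then a + (n : ℤ) else 0) = 0
    rw [if_neg hk1, if_neg hk2]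
  rw [hmon _ hmuz, hmon lam hlz]
  rw [hlam', hlam'', h1, h2, xalpha]
  rw [div_zpow]
  have e1 : XX ℂ r ((i : Fin (r+1))) ^ (a + 1)
      = XX ℂ r ((i : Fin (r+1))) ^ (a + (n : ℤ)) * XX ℂ r ((i : Fin (r+1))) ^ (1 - (n : ℤ)) := by
    rw [← zpow_add₀ hXi]; congr 1; ring
  have e2 : XX ℂ r (((i+1 : ℕ) : Fin (r+1))) ^ (a + (n : ℤ))
      = XX ℂ r (((i+1 : ℕ) : Fin (r+1))) ^ (a + 1)
        * (XX ℂ r (((i+1 : ℕ) : Fin (r+1))) ^ (1 - (n : ℤ)))⁻¹ := by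
    rw [← zpow_neg, ← zpow_add₀ hXj]; congr 1; ring
  rw [e1, e2, div_eq_mul_inv, mul_mul_mul_comm]

end MetaPaper
end
end

section
/- If β = (β_1,…,β_{r+1}) ∈ ℤ^{r+1} satisfies β_i = β_{i+1} + 1 for some 1 ≤ i ≤ r, then D_i(x^β) = 0. -/
open scoped BigOperators Classical
open Fin.NatCast

noncomputable section

namespace MetaPaper

variable (F : Type) [Field F]

variable (r : ℕ)

variable (n : ℕ) (v : F) (g : ℤ → F)

variable {F r n v g}

variable (F r n v g)

section Aux
variable {F : Type} [Field F] {r : ℕ}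

lemma XX_ne_zero_s7 (F : Type) [Field F] (r : ℕ) (j : Fin (r+1)) : XX F r j ≠ 0 := by
  simpa [XX] using
    (map_ne_zero_iff _ (IsFractionRing.injective (MvPolynomial (Fin (r+1)) F) (K F r))).mpr
      (MvPolynomial.X_ne_zero j)

lemma mon_add (F : Type) [Field F] (r : ℕ) (lam mu : Fin (r+1) → ℤ) :
    mon F r (fun j => lam j + mu j) = mon F r lam * mon F r mu := by
  rw [mon, mon, mon, ← Finset.prod_mul_distrib]
  exact Finset.prod_congr rfl fun j _ => zpow_add₀ (XX_ne_zero_s7 F r j) _ _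

lemma mon_single (F : Type) [Field F] (r : ℕ) (p : Fin (r+1)) (c : ℤ) :
    mon F r (fun j => if j = p then c else 0) = XX F r p ^ c := by
  rw [mon]
  rw [Finset.prod_congr rfl (fun j (_ : j ∈ Finset.univ) =>
    show (XX F r j ^ (if j = p then c else 0)) = (if j = p then XX F r j ^ c else 1) by
      split <;> simp)]
  simp

lemma neg_one_emod (n : ℕ) (hn : 1 ≤ n) : (-1 : ℤ) % (n : ℤ) = (n : ℤ) - 1 := by
  have h := Int.add_mul_emod_self_left (a := (-1 : ℤ)) (b := (n : ℤ)) (c := 1)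
  rw [← h, mul_one, Int.emod_eq_of_lt (by omega) (by omega)]
  ring

end Aux

/-- if `β_i = β_{i+1} + 1` then `D_i(x^β) = 0`. -/
theorem statement7 (r n : ℕ) (hr : 1 ≤ r) (hn : 1 ≤ n) (v : ℂ) (g : ℤ → ℂ)
    (hv : v ≠ 0)
    (hgper : ∀ i j : ℤ, i % (n : ℤ) = j % (n : ℤ) → g i = g j)
    (hg0 : g 0 = -1)
    (hginv : ∀ i : ℤ, 1 ≤ i → i ≤ (n : ℤ) - 1 → g i * g ((n : ℤ) - i) = v⁻¹)
    (S : Setup ℂ r n v g) :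
    ∀ i : ℕ, i < r → ∀ β : Fin (r+1) → ℤ,
      β ((i : ℕ) : Fin (r+1)) = β ((i+1 : ℕ) : Fin (r+1)) + 1 →
      Dem S i (mon ℂ r β) = 0 := by
  intro i hir β hβ
  set ι : Fin (r+1) := ((i : ℕ) : Fin (r+1)) with hι
  set ι' : Fin (r+1) := (((i+1 : ℕ) : ℕ) : Fin (r+1)) with hι'
  have hval1 : ι.val = i := by
    rw [hι, Fin.val_natCast]; exact Nat.mod_eq_of_lt (by omega)
  have hval2 : ι'.val = i + 1 := by
    rw [hι', Fin.val_natCast]; exact Nat.mod_eq_of_lt (by omega)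
  have hne : ι ≠ ι' := by
    intro h; rw [Fin.ext_iff, hval1, hval2] at h; omega
  set a : K ℂ r := xalpha ℂ r i with ha_def
  have ha : a ≠ 0 := div_ne_zero (XX_ne_zero_s7 ℂ r ι) (XX_ne_zero_s7 ℂ r ι')
  -- denominator nonzero
  have hD : (1 : K ℂ r) - CC ℂ r v * a ^ (n : ℕ) ≠ 0 := by
    have hXn : XX ℂ r ι' ^ (n : ℕ) ≠ 0 := pow_ne_zero _ (XX_ne_zero_s7 ℂ r ι')
    have key : (1 : K ℂ r) - CC ℂ r v * a ^ (n : ℕ)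
        = (XX ℂ r ι' ^ (n : ℕ) - CC ℂ r v * XX ℂ r ι ^ (n : ℕ)) / XX ℂ r ι' ^ (n : ℕ) := by
      have hxa : a = XX ℂ r ι / XX ℂ r ι' := rfl
      rw [hxa, div_pow]
      rw [eq_div_iff hXn]
      field_simp
    rw [key]
    refine div_ne_zero ?_ hXn
    have hrepr : XX ℂ r ι' ^ (n : ℕ) - CC ℂ r v * XX ℂ r ι ^ (n : ℕ)
        = algebraMap (MvPolynomial (Fin (r+1)) ℂ) (K ℂ r)
            (MvPolynomial.X ι' ^ n - MvPolynomial.C v * MvPolynomial.X ι ^ n) := by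
      rw [RingHom.map_sub, RingHom.map_mul, RingHom.map_pow, RingHom.map_pow]; rfl
    rw [hrepr,
      map_ne_zero_iff _ (IsFractionRing.injective (MvPolynomial (Fin (r+1)) ℂ) (K ℂ r))]
    intro h0
    have hsne : Finsupp.single ι n ≠ Finsupp.single ι' n := by
      intro h
      have := DFunLike.congr_fun h ι
      simp [Finsupp.single_apply, Ne.symm hne] at this
      omega
    have h1 := congrArg (MvPolynomial.coeff (Finsupp.single ι' n)) h0
    simp [MvPolynomial.coeff_X_pow, hsne] at h1
  -- rewrite the action
  have hdiff : β ι' - β ι = -1 := by omega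
  have hs := S.act_simple i hir β
  rw [← ha_def] at hs
  rw [show (-((β ι' - β ι) % (n : ℤ))) = 1 - (n : ℤ) by
      rw [hdiff, neg_one_emod n hn]; ring,
    show (1 : ℤ) + β ι' - β ι = 0 by omega] at hs
  have hCC : CC ℂ r (g 0) = -1 := by
    have h1 : (MvPolynomial.C (-1 : ℂ) : MvPolynomial (Fin (r+1)) ℂ) = -1 := by
      rw [eq_neg_iff_add_eq_zero, ← MvPolynomial.C_1, ← MvPolynomial.C_add]
      simp
    rw [hg0, CC, h1, RingHom.map_neg, RingHom.map_one]
  rw [hCC] at hs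
  have hfactor : a ^ ((1 : ℤ) - (n : ℤ)) * (1 - CC ℂ r v)
      - CC ℂ r v * (-1) * a ^ ((1 : ℤ) - (n : ℤ)) * (1 - a ^ (n : ℕ))
      = a ^ ((1 : ℤ) - (n : ℤ)) * (1 - CC ℂ r v * a ^ (n : ℕ)) := by ring
  rw [hfactor] at hs
  -- identify the permuted monomial
  have hfun : (fun j => β (sref r i j))
      = fun j => β j + ((if j = ι then (-1 : ℤ) else 0) + (if j = ι' then (1 : ℤ) else 0)) := by
    have hne' : ι' ≠ ι := hne.symm
    funext j
    by_cases h1 : j = ι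
    · subst h1
      rw [show sref r i ι = ι' from Equiv.swap_apply_left ι ι']
      simp [hne]
      omega
    · by_cases h2 : j = ι'
      · subst h2
        rw [show sref r i ι' = ι from Equiv.swap_apply_right ι ι']
        simp [hne']
        omega
      · rw [show sref r i j = j from Equiv.swap_apply_of_ne_of_ne h1 h2]
        simp [h1, h2]
  have hmon : mon ℂ r (fun j => β (sref r i j)) = mon ℂ r β * a⁻¹ := by
    rw [hfun, mon_add ℂ r β _, mon_add ℂ r _ _, mon_single, mon_single]
    rw [ha_def, xalpha, ← hι, ← hι']
    rw [zpow_neg_one, zpow_one]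
    field_simp
  rw [hmon] at hs
  have hs' : S.act (sref r i) (mon ℂ r β) = mon ℂ r β * a⁻¹ * a ^ ((1 : ℤ) - (n : ℤ)) := by
    rw [hs]
    field_simp
  -- conclude
  rw [Dem, hs']
  have hcancel : a ^ (n : ℕ) * (mon ℂ r β * a⁻¹ * a ^ ((1 : ℤ) - (n : ℤ))) = mon ℂ r β := by
    rw [← zpow_natCast a n, ← zpow_neg_one]
    rw [show a ^ (n : ℤ) * (mon ℂ r β * a ^ (-1 : ℤ) * a ^ ((1 : ℤ) - (n : ℤ)))
        = mon ℂ r β * (a ^ (n : ℤ) * a ^ (-1 : ℤ) * a ^ ((1 : ℤ) - (n : ℤ))) by ring]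
    rw [← zpow_add₀ ha, ← zpow_add₀ ha]
    rw [show (n : ℤ) + -1 + (1 - (n : ℤ)) = 0 by ring, zpow_zero, mul_one]
  rw [hcancel, sub_self, zero_div]


end MetaPaper
end
end

section
/- Let a ≥ 1 be an integer divisible by n, let λ_2 ≥ λ_3 and Γ_13 ≥ 0 be integers, and set L = Γ_13 + λ_2 − λ_3 + 1. Define δ_a(c) = 0 if c < a, δ_a(c) = −v if c = a, δ_a(c) = 1 − v if c > a, and h(c) = h♭(c) if c < L and h(c) = g♭(c) if c = L. Then for every 1 ≤ i ≤ r: D_i(f) = 0, where f = Σ_{c=1}^{L} δ_a(c)·h(c)·x_i^{λ_3 + c − Γ_13}·x_{i+1}^{λ_2 + a − c}. -/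
open scoped BigOperators Classical
open Fin.NatCast

noncomputable section

namespace MetaPaper

variable (F : Type) [Field F]

variable (r : ℕ)

variable (n : ℕ) (v : F) (g : ℤ → F)

variable {F r n v g}

variable (F r n v g)

set_option maxHeartbeats 2000000

lemma divgen {E : Type} [Field E] (CO EE tc tE tn dd BB : E) (hd0 : dd ≠ 0) :
    CO * (BB * tc) - tn * (CO * (BB * tE / dd * EE))
      = BB / dd * (CO * (tc * dd - tn * tE * EE)) := by
  field_simp

theorem core_sum {E : Type} [Field E] (φ : ℂ →+* E) (t : E) (ht : t ≠ 0)
    (n : ℕ) (hn : 1 ≤ n) (v : ℂ) (g : ℤ → ℂ) (hv : v ≠ 0)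
    (hgper : ∀ i j : ℤ, i % (n : ℤ) = j % (n : ℤ) → g i = g j)
    (hg0 : g 0 = -1)
    (hginv : ∀ i : ℤ, 1 ≤ i → i ≤ (n : ℤ) - 1 → g i * g ((n : ℤ) - i) = v⁻¹)
    (a L : ℤ) (ha : 1 ≤ a) (hdiv : (n : ℤ) ∣ a) (hL1 : 1 ≤ L) :
    ∑ c ∈ Finset.Icc (1:ℤ) L,
      φ ((if c < a then 0 else if c = a then -v else 1 - v) *
          (if c < L then hflat ℂ n v c else gflat ℂ v g c)) *
        (t ^ c * (1 - φ v * t ^ (n:ℤ)) -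
          t ^ (n:ℤ) * t ^ (L - 1 + a - c) *
            (t ^ (-((L - 1 + a - 2*c) % (n:ℤ))) * (1 - φ v) -
              φ v * φ (g (L + a - 2*c)) * t ^ (1 - (n:ℤ)) * (1 - t ^ (n:ℤ)))) = 0 := by
  have hnpos : (0:ℤ) < (n:ℤ) := by exact_mod_cast hn
  have hn0 : (n:ℤ) ≠ 0 := by omega
  have hz : ∀ x : ℤ, t ^ x ≠ 0 := fun x => zpow_ne_zero x ht
  have hmod : ∀ x y : ℤ, (n:ℤ) ∣ (x - y) → 0 ≤ y → y < (n:ℤ) → x % (n:ℤ) = y := by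
    intro x y hdvd h0 h1
    obtain ⟨d, hd⟩ := hdvd
    have hx : x = y + (n:ℤ) * d := by omega
    rw [hx, Int.add_mul_emod_self_left, Int.emod_eq_of_lt h0 h1]
  have hgeq : ∀ x y : ℤ, (n:ℤ) ∣ (x - y) → g x = g y := by
    intro x y hdvd
    refine hgper x y ?_
    rw [Int.emod_eq_emod_iff_emod_sub_eq_zero]
    exact Int.emod_eq_zero_of_dvd hdvd
  -- generic expansion of the bracket
  have expand : ∀ (c ρc : ℤ) (GG : E),
      t ^ c * (1 - φ v * t ^ (n:ℤ)) -
        t ^ (n:ℤ) * t ^ (L - 1 + a - c) *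
          (t ^ (-ρc) * (1 - φ v) - φ v * GG * t ^ (1 - (n:ℤ)) * (1 - t ^ (n:ℤ)))
      = t ^ c - φ v * t ^ (c + (n:ℤ)) - (1 - φ v) * t ^ ((n:ℤ) + (L - 1 + a - c) - ρc)
        + φ v * GG * (t ^ (L + a - c) - t ^ (L + a - c + (n:ℤ))) := by
    intro c ρc GG
    simp only [zpow_add₀ ht, zpow_sub₀ ht, zpow_neg, zpow_one]
    field_simp [hz]
    ring
  rcases lt_trichotomy L a with hLa | hLa | hLa
  · refine Finset.sum_eq_zero fun c hc => ?_
    rw [Finset.mem_Icc] at hc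
    rw [if_pos (by omega : c < a), zero_mul, map_zero, zero_mul]
  · -- L = a
    subst hLa
    refine Eq.trans (Finset.sum_eq_single_of_mem L (Finset.mem_Icc.mpr ⟨hL1, le_refl L⟩) ?_) ?_
    · intro b hb hbL
      rw [Finset.mem_Icc] at hb
      rw [if_pos (by omega : b < L), zero_mul, map_zero, zero_mul]
    · have h1 : (L - 1 + L - 2*L) % (n:ℤ) = (n:ℤ) - 1 :=
        hmod _ _ ⟨-1, by ring⟩ (by omega) (by omega)
      have h2 : g (L + L - 2*L) = g 0 := hgeq _ _ ⟨0, by ring⟩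
      rw [h1, h2, hg0, expand L ((n:ℤ) - 1) (φ (-1))]
      rw [show (n:ℤ) + (L - 1 + L - L) - ((n:ℤ) - 1) = L from by ring,
        show L + L - L = L from by ring]
      simp only [map_neg, map_one]
      exact mul_eq_zero_of_right _ (by ring)
  · -- a < L : the main case
    set ρ : ℤ := (L - 1) % (n:ℤ) with hρdef
    have hρ0 : 0 ≤ ρ := Int.emod_nonneg _ hn0
    have hρn : ρ < (n:ℤ) := Int.emod_lt_of_pos _ hnpos
    have hNdvd : (n:ℤ) ∣ (L - 1 - ρ) := by
      rw [hρdef]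
      exact Int.dvd_self_sub_of_emod_eq rfl
    have haN : a ≤ L - 1 - ρ := by
      by_contra hcon
      push_neg at hcon
      have h1 : (n:ℤ) ∣ (a - (L - 1 - ρ)) := dvd_sub hdiv hNdvd
      have h3 : (n:ℤ) ≤ a - (L - 1 - ρ) := Int.le_of_dvd (by omega) h1
      omega
    obtain ⟨K', hK'⟩ : ∃ k : ℕ, L - 1 - ρ = a + (k:ℤ)*(n:ℤ) := by
      obtain ⟨d, hd⟩ := dvd_sub hNdvd hdiv
      have hd0 : 0 ≤ d := by
        by_contra hneg
        push_neg at hneg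
        have : (n:ℤ)*d < 0 := mul_neg_of_pos_of_neg hnpos hneg
        omega
      refine ⟨d.toNat, ?_⟩
      rw [Int.toNat_of_nonneg hd0]
      linarith [hd]
    set m : ℕ := K' + 1 with hmdef
    -- the support
    set D : Finset ℤ := insert L ((Finset.range m).image (fun k : ℕ => a + (k:ℤ)*(n:ℤ)))
      with hDdef
    have himle : ∀ k : ℕ, k < m → a + (k:ℤ)*(n:ℤ) ≤ L - 1 - ρ := by
      intro k hk
      have hkK : (k:ℤ) ≤ (K':ℤ) := by exact_mod_cast Nat.lt_succ_iff.mp hk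
      have : (k:ℤ)*(n:ℤ) ≤ (K':ℤ)*(n:ℤ) := mul_le_mul_of_nonneg_right hkK (le_of_lt hnpos)
      omega
    have hsub : D ⊆ Finset.Icc (1:ℤ) L := by
      intro x hx
      rw [hDdef, Finset.mem_insert, Finset.mem_image] at hx
      rw [Finset.mem_Icc]
      rcases hx with rfl | ⟨k, hk, rfl⟩
      · omega
      · have h1 := himle k (Finset.mem_range.mp hk)
        have h2 : 0 ≤ (k:ℤ)*(n:ℤ) := by positivity
        omega
    have hout : ∀ c ∈ Finset.Icc (1:ℤ) L, c ∉ D →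
        φ ((if c < a then 0 else if c = a then -v else 1 - v) *
          (if c < L then hflat ℂ n v c else gflat ℂ v g c)) *
        (t ^ c * (1 - φ v * t ^ (n:ℤ)) -
          t ^ (n:ℤ) * t ^ (L - 1 + a - c) *
            (t ^ (-((L - 1 + a - 2*c) % (n:ℤ))) * (1 - φ v) -
              φ v * φ (g (L + a - 2*c)) * t ^ (1 - (n:ℤ)) * (1 - t ^ (n:ℤ)))) = 0 := by
      intro c hc hcD
      rw [Finset.mem_Icc] at hc
      have hcL : c ≠ L := by
        intro h
        exact hcD (h ▸ (hDdef ▸ Finset.mem_insert_self L _))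
      have hcL' : c < L := by omega
      rw [if_pos hcL']
      by_cases hca : c < a
      · rw [if_pos hca, zero_mul, map_zero, zero_mul]
      · rw [if_neg hca]
        have hcnea : c ≠ a := by
          intro h
          refine hcD ?_
          rw [hDdef, Finset.mem_insert]
          right
          exact Finset.mem_image.mpr ⟨0, Finset.mem_range.mpr (by omega), by omega⟩
        rw [if_neg hcnea]
        have hndvd : ¬ (n:ℤ) ∣ c := by
          intro hdc
          have hcN : c ≤ L - 1 - ρ := by
            by_contra hcon
            push_neg at hcon
            have h1 : (n:ℤ) ∣ (c - (L - 1 - ρ)) := dvd_sub hdc hNdvd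
            have h3 : (n:ℤ) ≤ c - (L - 1 - ρ) := Int.le_of_dvd (by omega) h1
            omega
          obtain ⟨e, he⟩ := dvd_sub hdc hdiv
          have he0 : 0 ≤ e := by
            by_contra hneg
            push_neg at hneg
            have : (n:ℤ)*e < 0 := mul_neg_of_pos_of_neg hnpos hneg
            omega
          refine hcD ?_
          rw [hDdef, Finset.mem_insert]
          right
          refine Finset.mem_image.mpr ⟨e.toNat, Finset.mem_range.mpr ?_, ?_⟩
          · -- e.toNat < m
            have h1 : (n:ℤ)*e ≤ (n:ℤ)*(K':ℤ) := by
              have h2 : (K':ℤ)*(n:ℤ) = (n:ℤ)*(K':ℤ) := mul_comm _ _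
              omega
            have h2 : e ≤ (K':ℤ) := le_of_mul_le_mul_left h1 hnpos
            omega
          · rw [Int.toNat_of_nonneg he0]
            linarith [he]
        simp only [hflat, if_neg hndvd, mul_zero, map_zero, zero_mul]
    -- now reduce to the support D
    refine Eq.trans (Finset.sum_subset hsub hout).symm ?_
    have hLnotim : L ∉ (Finset.range m).image (fun k : ℕ => a + (k:ℤ)*(n:ℤ)) := by
      intro hmem
      obtain ⟨k, hk, hkL⟩ := Finset.mem_image.mp hmem
      have := himle k (Finset.mem_range.mp hk)
      omega
    have hinj : ∀ x ∈ Finset.range m, ∀ y ∈ Finset.range m,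
        a + (x:ℤ)*(n:ℤ) = a + (y:ℤ)*(n:ℤ) → x = y := by
      intro x _ y _ hxy
      have h1 : (x:ℤ)*(n:ℤ) = (y:ℤ)*(n:ℤ) := by omega
      have h2 : (x:ℤ) = (y:ℤ) := mul_right_cancel₀ hn0 h1
      exact_mod_cast h2
    rw [hDdef, Finset.sum_insert hLnotim, Finset.sum_image hinj]
    -- notation
    set s : ℕ → E := fun j => t ^ (a + (j:ℤ)*(n:ℤ)) with hsdef
    set w : ℕ → E := fun j => t ^ (L + (n:ℤ) - (j:ℤ)*(n:ℤ)) with hwdef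
    set Br : ℕ → E := fun k =>
      s k - φ v * s (k+1) - (1 - φ v) * s (m - k) + φ v * φ (g L) * (w (k+1) - w k)
      with hBrdef
    -- rewrite each summand
    have hterm : ∀ k ∈ Finset.range m,
        φ ((if a + (k:ℤ)*(n:ℤ) < a then 0 else if a + (k:ℤ)*(n:ℤ) = a then -v else 1 - v) *
          (if a + (k:ℤ)*(n:ℤ) < L then hflat ℂ n v (a + (k:ℤ)*(n:ℤ))
            else gflat ℂ v g (a + (k:ℤ)*(n:ℤ)))) *
        (t ^ (a + (k:ℤ)*(n:ℤ)) * (1 - φ v * t ^ (n:ℤ)) -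
          t ^ (n:ℤ) * t ^ (L - 1 + a - (a + (k:ℤ)*(n:ℤ))) *
            (t ^ (-((L - 1 + a - 2*(a + (k:ℤ)*(n:ℤ))) % (n:ℤ))) * (1 - φ v) -
              φ v * φ (g (L + a - 2*(a + (k:ℤ)*(n:ℤ)))) * t ^ (1 - (n:ℤ)) *
                (1 - t ^ (n:ℤ))))
        = φ ((1-v)^2) * Br k - (if k = 0 then (1 - φ v) * Br 0 else 0) := by
      intro k hk
      have hkm : k < m := Finset.mem_range.mp hk
      have hkK : (k:ℤ) ≤ (K':ℤ) := by exact_mod_cast Nat.lt_succ_iff.mp hkm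
      have hkn0 : 0 ≤ (k:ℤ)*(n:ℤ) := by positivity
      have hkn1 : (k:ℤ)*(n:ℤ) ≤ (K':ℤ)*(n:ℤ) :=
        mul_le_mul_of_nonneg_right hkK (le_of_lt hnpos)
      have hcL : a + (k:ℤ)*(n:ℤ) < L := by omega
      have hdc : (n:ℤ) ∣ (a + (k:ℤ)*(n:ℤ)) := dvd_add hdiv ⟨k, mul_comm _ _⟩
      -- modulus and g-value rewrites
      obtain ⟨dN, hdN⟩ := hNdvd
      obtain ⟨da, hda⟩ := hdiv
      have hm1 : (L - 1 + a - 2*(a + (k:ℤ)*(n:ℤ))) % (n:ℤ) = ρ := by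
        refine hmod _ _ ⟨dN - da - 2*k, ?_⟩ hρ0 hρn
        push_cast
        linear_combination hdN - hda
      have hm2 : g (L + a - 2*(a + (k:ℤ)*(n:ℤ))) = g L := by
        refine hgeq _ _ ⟨-da - 2*k, ?_⟩
        push_cast
        linear_combination -hda
      rw [hm1, hm2, if_pos hcL, if_neg (by omega : ¬ a + (k:ℤ)*(n:ℤ) < a)]
      rw [expand (a + (k:ℤ)*(n:ℤ)) ρ (φ (g L))]
      have hfl : hflat ℂ n v (a + (k:ℤ)*(n:ℤ)) = 1 - v := by
        simp [hflat, hdc]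
      rw [hfl]
      -- identify the expanded bracket with Br k
      have hexps : t ^ (a + (k:ℤ)*(n:ℤ)) - φ v * t ^ (a + (k:ℤ)*(n:ℤ) + (n:ℤ))
          - (1 - φ v) * t ^ ((n:ℤ) + (L - 1 + a - (a + (k:ℤ)*(n:ℤ))) - ρ)
          + φ v * φ (g L) * (t ^ (L + a - (a + (k:ℤ)*(n:ℤ)))
            - t ^ (L + a - (a + (k:ℤ)*(n:ℤ)) + (n:ℤ))) = Br k := by
        rw [hBrdef]
        simp only [hsdef, hwdef]
        have e1 : a + ((k+1:ℕ):ℤ)*(n:ℤ) = a + (k:ℤ)*(n:ℤ) + (n:ℤ) := by push_cast; ring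
        have e2 : a + ((m - k:ℕ):ℤ)*(n:ℤ) = (n:ℤ) + (L - 1 + a - (a + (k:ℤ)*(n:ℤ))) - ρ := by
          have hc : ((m - k:ℕ):ℤ) = (m:ℤ) - (k:ℤ) := by
            rw [Nat.cast_sub (le_of_lt hkm)]
          rw [hc, hmdef]
          push_cast
          linear_combination -hK'
        have e3 : L + (n:ℤ) - ((k+1:ℕ):ℤ)*(n:ℤ) = L + a - (a + (k:ℤ)*(n:ℤ)) := by
          push_cast; ring
        have e4 : L + (n:ℤ) - (k:ℤ)*(n:ℤ) = L + a - (a + (k:ℤ)*(n:ℤ)) + (n:ℤ) := by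
          push_cast; ring
        rw [e1, e2, e3, e4]
      rw [hexps]
      by_cases hk0 : k = 0
      · subst hk0
        rw [if_pos rfl, if_pos (by push_cast; omega : a + ((0:ℕ):ℤ)*(n:ℤ) = a)]
        have hc : φ (-v * (1-v)) = φ ((1-v)^2) - (1 - φ v) := by
          simp only [map_mul, map_sub, map_one, map_neg, map_pow]
          ring
        rw [hc]
        ring
      · rw [if_neg hk0]
        have hkpos : (0:ℤ) < (k:ℤ)*(n:ℤ) :=
          mul_pos (by exact_mod_cast Nat.pos_of_ne_zero hk0) hnpos
        rw [if_neg (by omega : ¬ a + (k:ℤ)*(n:ℤ) = a)]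
        have hc : φ ((1-v) * (1-v)) = φ ((1-v)^2) := congrArg φ (by ring)
        rw [hc]
        ring
    rw [Finset.sum_congr rfl hterm]
    rw [Finset.sum_sub_distrib, ← Finset.mul_sum]
    rw [Finset.sum_ite_eq' (Finset.range m) 0 (fun _ => (1 - φ v) * Br 0)]
    rw [if_pos (Finset.mem_range.mpr (by omega : 0 < m))]
    -- sum of Br
    have hsum : ∑ k ∈ Finset.range m, Br k
        = s 0 - s m + φ v * φ (g L) * (w m - w 0) := by
      rw [hBrdef]
      simp only [Finset.sum_add_distrib, Finset.sum_sub_distrib, ← Finset.mul_sum]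
      have h1 : ∑ k ∈ Finset.range m, s (k+1) = (∑ k ∈ Finset.range m, s k) + s m - s 0 := by
        have ha1 := Finset.sum_range_succ s m
        have ha2 := Finset.sum_range_succ' s m
        linear_combination ha1 - ha2
      have h2 : ∑ k ∈ Finset.range m, s (m - k) = (∑ k ∈ Finset.range m, s k) + s m - s 0 := by
        rw [show (∑ k ∈ Finset.range m, s (m - k)) = ∑ k ∈ Finset.range m, s (m - 1 - k + 1)
          from Finset.sum_congr rfl (fun k hk => by
            congr 1
            have := Finset.mem_range.mp hk
            omega)]
        rw [Finset.sum_range_reflect (fun j => s (j+1)) m]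
        rw [← h1]
      have h3 : (∑ k ∈ Finset.range m, w (k+1)) - ∑ k ∈ Finset.range m, w k = w m - w 0 := by
        rw [← Finset.sum_sub_distrib]
        exact Finset.sum_range_sub w m
      rw [h1, h2]
      linear_combination (φ v * φ (g L)) * h3
    rw [hsum]
    -- values of s and w
    have hs0 : s 0 = t ^ a := by
      rw [hsdef]; norm_num
    have hs1 : s 1 = t ^ (a + (n:ℤ)) := by
      rw [hsdef]; norm_num
    have hw1 : w 1 = t ^ L := by
      rw [hwdef]; norm_num
    have hw0 : w 0 = t ^ (L + (n:ℤ)) := by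
      rw [hwdef]; norm_num
    have hwm : w m = t ^ (a + ρ + 1) := by
      simp only [hwdef]
      rw [show L + (n:ℤ) - (m:ℤ)*(n:ℤ) = a + ρ + 1 from by
        rw [hmdef]; push_cast; linear_combination hK']
    -- the top term (c = L)
    rw [if_neg (by omega : ¬ L < a), if_neg (by omega : ¬ L = a), if_neg (lt_irrefl L)]
    rw [expand L ((L - 1 + a - 2*L) % (n:ℤ)) (φ (g (L + a - 2*L)))]
    rw [show L + a - 2*L = a - L from by ring]
    rw [show L + a - L = a from by ring]
    rw [hBrdef]
    simp only [Nat.sub_zero]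
    rw [hs0, hs1, hw1, hw0, hwm]
    obtain ⟨dN, hdN⟩ := hNdvd
    obtain ⟨da, hda⟩ := hdiv
    simp only [gflat]
    by_cases hρtop : ρ = (n:ℤ) - 1
    · -- n divides L
      have hm1 : (L - 1 + a - 2*L) % (n:ℤ) = (n:ℤ) - 1 := by
        refine hmod _ _ ⟨da - dN - 2, ?_⟩ (by omega) (by omega)
        linear_combination hda - hdN - hρtop
      have hgL : g L = -1 := by
        rw [hgeq L 0 ⟨dN + 1, by linear_combination hdN + hρtop⟩, hg0]
      have hgaL : g (a - L) = -1 := by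
        rw [hgeq (a - L) 0 ⟨da - dN - 1, by linear_combination hda - hdN - hρtop⟩, hg0]
      rw [hm1, hgL, hgaL]
      rw [show (n:ℤ) + (L - 1 + a - L) - ((n:ℤ) - 1) = a from by ring]
      rw [show a + ρ + 1 = a + (n:ℤ) from by omega]
      simp only [map_neg, map_one, map_mul, map_sub, map_pow]
      ring
    · -- n does not divide L
      have hρtop' : ρ < (n:ℤ) - 1 := by omega
      have hm1 : (L - 1 + a - 2*L) % (n:ℤ) = (n:ℤ) - 2 - ρ := by
        refine hmod _ _ ⟨da - dN - 1, ?_⟩ (by omega) (by omega)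
        linear_combination hda - hdN
      have hgL : g L = g (ρ + 1) := hgeq L (ρ+1) ⟨dN, by linear_combination hdN⟩
      have hgaL : g (a - L) = g ((n:ℤ) - (ρ + 1)) := by
        refine hgeq (a - L) ((n:ℤ) - (ρ+1)) ⟨da - dN - 1, ?_⟩
        linear_combination hda - hdN
      have hrel : φ v * (φ (g (ρ+1)) * φ (g ((n:ℤ) - (ρ+1)))) = 1 := by
        rw [← map_mul, ← map_mul]
        rw [show g (ρ+1) * g ((n:ℤ) - (ρ+1)) = v⁻¹ from hginv (ρ+1) (by omega) (by omega)]
        rw [mul_inv_cancel₀ hv, map_one]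
      rw [hm1, hgL, hgaL]
      rw [show (n:ℤ) + (L - 1 + a - L) - ((n:ℤ) - 2 - ρ) = a + ρ + 1 from by ring]
      simp only [map_mul, map_sub, map_one, map_pow]
      linear_combination ((1 - φ v) * φ v * (t ^ a - t ^ (a + (n:ℤ)))) * hrel


/-- Lemma `LEMMA:FANNIHILATED`: for `n ∣ a`, `a ≥ 1`,
`λ_2 ≥ λ_3`, `Γ_{13} ≥ 0` and `L = Γ_{13} + λ_2 - λ_3 + 1`,
`D_i(Σ_{c=1}^{L} δ_a(c) h(c) x_i^{λ_3+c-Γ_{13}} x_{i+1}^{λ_2+a-c}) = 0`. -/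
theorem statement19 (r n : ℕ) (hr : 1 ≤ r) (hn : 1 ≤ n) (v : ℂ) (g : ℤ → ℂ)
    (hv : v ≠ 0)
    (hgper : ∀ i j : ℤ, i % (n : ℤ) = j % (n : ℤ) → g i = g j)
    (hg0 : g 0 = -1)
    (hginv : ∀ i : ℤ, 1 ≤ i → i ≤ (n : ℤ) - 1 → g i * g ((n : ℤ) - i) = v⁻¹)
    (S : Setup ℂ r n v g)
    (a : ℤ) (ha : 1 ≤ a) (hdiv : (n : ℤ) ∣ a)
    (lam2 lam3 Γ13 : ℤ) (hl : lam3 ≤ lam2) (hΓ : 0 ≤ Γ13) :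
    ∀ i : ℕ, i < r →
      Dem S i (∑ c ∈ Finset.Icc (1 : ℤ) (Γ13 + lam2 - lam3 + 1),
        CC ℂ r ((if c < a then 0 else if c = a then -v else 1 - v) *
          (if c < Γ13 + lam2 - lam3 + 1 then hflat ℂ n v c else gflat ℂ v g c)) *
        mon ℂ r (fun j =>
          if j = (i : Fin (r+1)) then lam3 + c - Γ13
          else if j = ((i+1 : ℕ) : Fin (r+1)) then lam2 + a - c else 0)) = 0 := by
  intro i hi
  have hi1 : i < r + 1 := by omega
  have hi2 : i + 1 < r + 1 := by omega
  set I : Fin (r+1) := (i : Fin (r+1)) with hIdef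
  set J : Fin (r+1) := ((i+1 : ℕ) : Fin (r+1)) with hJdef
  have hIJ : I ≠ J := by
    rw [hIdef, hJdef]
    intro h
    have h2 := congrArg Fin.val h
    rw [Fin.val_cast_of_lt hi1, Fin.val_cast_of_lt hi2] at h2
    omega
  have hinj : Function.Injective (algebraMap (MvPolynomial (Fin (r+1)) ℂ) (K ℂ r)) :=
    IsFractionRing.injective _ _
  have hX : XX ℂ r I ≠ 0 := by
    simp only [XX]
    exact (map_ne_zero_iff _ hinj).mpr (MvPolynomial.X_ne_zero _)
  have hY : XX ℂ r J ≠ 0 := by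
    simp only [XX]
    exact (map_ne_zero_iff _ hinj).mpr (MvPolynomial.X_ne_zero _)
  have hxa : xalpha ℂ r i = XX ℂ r I / XX ℂ r J := rfl
  have ht : xalpha ℂ r i ≠ 0 := by
    rw [hxa]; exact div_ne_zero hX hY
  have hz : ∀ x : ℤ, xalpha ℂ r i ^ x ≠ 0 := fun x => zpow_ne_zero x ht
  -- the denominator is nonzero
  have hd : (1 : K ℂ r) - CC ℂ r v * xalpha ℂ r i ^ (n:ℤ) ≠ 0 := by
    intro hcon
    have h1 : CC ℂ r v * xalpha ℂ r i ^ (n:ℤ) = 1 := by linear_combination -hcon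
    have h2 : xalpha ℂ r i ^ (n:ℤ) = XX ℂ r I ^ (n:ℕ) / XX ℂ r J ^ (n:ℕ) := by
      rw [hxa, zpow_natCast, div_pow]
    rw [h2] at h1
    have hYn : XX ℂ r J ^ (n:ℕ) ≠ 0 := pow_ne_zero _ hY
    have h3 : CC ℂ r v * XX ℂ r I ^ (n:ℕ) = XX ℂ r J ^ (n:ℕ) := by
      field_simp at h1
      exact h1
    have h4 : (MvPolynomial.C v * MvPolynomial.X I ^ n : MvPolynomial (Fin (r+1)) ℂ)
        = MvPolynomial.X J ^ n := by
      apply hinj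
      rw [map_mul, map_pow, map_pow]
      exact h3
    have h5 := congrArg (MvPolynomial.coeff (Finsupp.single J n)) h4
    rw [MvPolynomial.coeff_C_mul, MvPolynomial.X_pow_eq_monomial,
      MvPolynomial.X_pow_eq_monomial, MvPolynomial.coeff_monomial,
      MvPolynomial.coeff_monomial, if_pos rfl, if_neg ?_] at h5
    · simp at h5
    · intro hs
      exact hIJ ((Finsupp.single_left_inj (by omega : n ≠ 0)).mp hs)
  -- reduce to showing the numerator vanishes
  simp only [Dem]
  rw [div_eq_zero_iff]
  left
  -- push the action inside the sum
  have hactsum : ∀ (G : ℤ → K ℂ r) (s : Finset ℤ),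
      S.act (sref r i) (∑ c ∈ s, G c) = ∑ c ∈ s, S.act (sref r i) (G c) :=
    fun G s => map_sum (AddMonoidHom.mk' (S.act (sref r i)) (S.act_add (sref r i))) G s
  rw [hactsum, Finset.mul_sum, ← Finset.sum_sub_distrib]
  -- the Chinta–Gunnells constant as a ring hom
  have hφ : ∀ x : ℂ, CC ℂ r x
      = ((algebraMap (MvPolynomial (Fin (r+1)) ℂ) (K ℂ r)).comp
          (MvPolynomial.C : ℂ →+* MvPolynomial (Fin (r+1)) ℂ)) x := fun x => rfl
  have hcore := core_sum
    ((algebraMap (MvPolynomial (Fin (r+1)) ℂ) (K ℂ r)).comp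
      (MvPolynomial.C : ℂ →+* MvPolynomial (Fin (r+1)) ℂ))
    (xalpha ℂ r i) ht n hn v g hv hgper hg0 hginv a (Γ13 + lam2 - lam3 + 1) ha hdiv
    (by omega)
  simp only [← hφ] at hcore
  -- monomial computation
  have hmon : ∀ p q : ℤ, mon ℂ r (fun j => if j = I then p else if j = J then q else 0)
      = XX ℂ r I ^ p * XX ℂ r J ^ q := by
    intro p q
    have h1 : ∀ x ∈ (Finset.univ : Finset (Fin (r+1))),
        x ∉ ({I, J} : Finset (Fin (r+1))) →
        XX ℂ r x ^ (if x = I then p else if x = J then q else 0) = 1 := by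
      intro x _ hx
      simp only [Finset.mem_insert, Finset.mem_singleton] at hx
      push_neg at hx
      rw [if_neg hx.1, if_neg hx.2, zpow_zero]
    rw [show mon ℂ r (fun j => if j = I then p else if j = J then q else 0)
        = ∏ j : Fin (r+1), XX ℂ r j ^ (if j = I then p else if j = J then q else 0) from rfl]
    rw [← Finset.prod_subset (Finset.subset_univ _) h1]
    rw [Finset.prod_pair hIJ]
    rw [if_pos rfl, if_neg (Ne.symm hIJ), if_pos rfl]
  have hsref : sref r i = Equiv.swap I J := rfl
  set B : K ℂ r := XX ℂ r I ^ (lam3 - Γ13) * XX ℂ r J ^ (lam2 + a) with hBdef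
  -- the per-term identity
  have key : ∀ c ∈ Finset.Icc (1:ℤ) (Γ13 + lam2 - lam3 + 1),
      (CC ℂ r ((if c < a then 0 else if c = a then -v else 1 - v) *
          (if c < Γ13 + lam2 - lam3 + 1 then hflat ℂ n v c else gflat ℂ v g c)) *
        mon ℂ r (fun j => if j = I then lam3 + c - Γ13 else if j = J then lam2 + a - c else 0)
        - xalpha ℂ r i ^ (n:ℕ) * S.act (sref r i)
          (CC ℂ r ((if c < a then 0 else if c = a then -v else 1 - v) *
            (if c < Γ13 + lam2 - lam3 + 1 then hflat ℂ n v c else gflat ℂ v g c)) *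
          mon ℂ r (fun j => if j = I then lam3 + c - Γ13 else if j = J then lam2 + a - c else 0)))
      = (B / (1 - CC ℂ r v * xalpha ℂ r i ^ (n:ℤ))) *
        (CC ℂ r ((if c < a then 0 else if c = a then -v else 1 - v) *
            (if c < Γ13 + lam2 - lam3 + 1 then hflat ℂ n v c else gflat ℂ v g c)) *
          (xalpha ℂ r i ^ c * (1 - CC ℂ r v * xalpha ℂ r i ^ (n:ℤ)) -
            xalpha ℂ r i ^ (n:ℤ) * xalpha ℂ r i ^ (Γ13 + lam2 - lam3 + 1 - 1 + a - c) *
              (xalpha ℂ r i ^ (-((Γ13 + lam2 - lam3 + 1 - 1 + a - 2*c) % (n:ℤ))) *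
                  (1 - CC ℂ r v) -
                CC ℂ r v * CC ℂ r (g (Γ13 + lam2 - lam3 + 1 + a - 2*c)) *
                  xalpha ℂ r i ^ (1 - (n:ℤ)) * (1 - xalpha ℂ r i ^ (n:ℤ))))) := by
    intro c _
    rw [S.act_const_mul]
    rw [S.act_simple i hi]
    rw [← hIdef, ← hJdef]
    have e1 : (if (I:Fin (r+1)) = I then lam3 + c - Γ13
        else if I = J then lam2 + a - c else 0) = lam3 + c - Γ13 := if_pos rfl
    have e2 : (if (J:Fin (r+1)) = I then lam3 + c - Γ13
        else if J = J then lam2 + a - c else 0) = lam2 + a - c := by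
      rw [if_neg (Ne.symm hIJ), if_pos rfl]
    rw [e2, e1]
    have hswap : (fun j => if (sref r i) j = I then lam3 + c - Γ13
          else if (sref r i) j = J then lam2 + a - c else 0)
        = (fun j => if j = I then lam2 + a - c else if j = J then lam3 + c - Γ13 else 0) := by
      funext j
      simp only [hsref]
      rcases eq_or_ne j I with rfl | hjI
      · rw [Equiv.swap_apply_left, if_neg (Ne.symm hIJ), if_pos rfl, if_pos rfl]
      · rcases eq_or_ne j J with rfl | hjJ
        · rw [Equiv.swap_apply_right, if_pos rfl, if_neg (Ne.symm hIJ), if_pos rfl]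
        · rw [Equiv.swap_apply_of_ne_of_ne hjI hjJ, if_neg hjI, if_neg hjJ,
            if_neg hjI, if_neg hjJ]
    rw [hswap]
    rw [hmon, hmon]
    have htn : xalpha ℂ r i ^ (n:ℕ) = xalpha ℂ r i ^ (n:ℤ) := (zpow_natCast _ n).symm
    rw [htn]
    rw [show lam2 + a - c - (lam3 + c - Γ13) = Γ13 + lam2 - lam3 + 1 - 1 + a - 2*c from by ring]
    rw [show 1 + (lam2 + a - c) - (lam3 + c - Γ13)
        = Γ13 + lam2 - lam3 + 1 + a - 2*c from by ring]
    have hB1 : XX ℂ r I ^ (lam3 + c - Γ13) * XX ℂ r J ^ (lam2 + a - c)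
        = B * xalpha ℂ r i ^ c := by
      rw [hBdef, hxa, div_zpow]
      rw [show lam3 + c - Γ13 = (lam3 - Γ13) + c from by ring, zpow_add₀ hX]
      rw [show lam2 + a - c = (lam2 + a) - c from by ring, zpow_sub₀ hY]
      ring
    have hB2 : XX ℂ r I ^ (lam2 + a - c) * XX ℂ r J ^ (lam3 + c - Γ13)
        = B * xalpha ℂ r i ^ (Γ13 + lam2 - lam3 + 1 - 1 + a - c) := by
      rw [hBdef, hxa, div_zpow]
      rw [show lam2 + a - c = (lam3 - Γ13) + (Γ13 + lam2 - lam3 + 1 - 1 + a - c) from by ring,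
        zpow_add₀ hX]
      rw [show lam3 + c - Γ13 = (lam2 + a) - (Γ13 + lam2 - lam3 + 1 - 1 + a - c) from by ring,
        zpow_sub₀ hY]
      ring
    rw [hB1, hB2]
    exact divgen _ _ _ _ _ _ _ hd
  rw [Finset.sum_congr rfl key, ← Finset.mul_sum, hcore, mul_zero]

end MetaPaper
end
end
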